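/- Let A be an associative algebra over Q with Hasse-Schmidt derivation (id, d_1, d_2, ...), and define derivations δ_n = n d_n - δ_1 d_{n-1} - ... - δ_{n-1} d_1. Then d_n = Σ c_{r_1,...,r_m} δ_{r_1} δ_{r_2} ... δ_{r_m}, summed over all compositions (r_1, ..., r_m) of n, where c_{r_1,...,r_m} = 1/((r_1+...+r_m)(r_2+...+r_m)...(r_{m-1}+r_m)(r_m)). -/

import Mathlib

open Finset

private def compFinset : ℕ → Finset (List ℕ)
  | 0 => {[]}
  | n+1 => (Finset.range (n+1)).biUnion fun i => (compFinset (n - i)).image (List.cons (i+1))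
  decreasing_by exact Nat.lt_succ_of_le (Nat.sub_le n i)

private lemma mem_compFinset : ∀ {n : ℕ} {l : List ℕ},
    l ∈ compFinset n ↔ l.sum = n ∧ ∀ x ∈ l, 0 < x := by
  intro n
  induction n using Nat.strong_induction_on with
  | _ n ih =>
    match n with
    | 0 =>
      intro l
      simp only [compFinset, Finset.mem_singleton]
      constructor
      · rintro rfl; simp
      · rintro ⟨h1, h2⟩
        cases l with
        | nil => rfl
        | cons a t =>
          exfalso
          have := h2 a (by simp)
          simp at h1
          omega
    | n+1 =>
      intro l
      rw [compFinset]
      simp only [Finset.mem_biUnion, Finset.mem_image, Finset.mem_range]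
      constructor
      · rintro ⟨i, hi, t, ht, rfl⟩
        rw [ih (n - i) (by omega)] at ht
        obtain ⟨hsum, hpos⟩ := ht
        refine ⟨by simp [hsum]; omega, ?_⟩
        intro x hx
        rcases List.mem_cons.mp hx with rfl | hx
        · omega
        · exact hpos x hx
      · rintro ⟨hsum, hpos⟩
        cases l with
        | nil => simp at hsum
        | cons a t =>
          have ha : 0 < a := hpos a (by simp)
          simp only [List.sum_cons] at hsum
          refine ⟨a - 1, by omega, t, ?_, by congr 1; omega⟩
        
          rw [ih (n - (a-1)) (by omega)]
          exact ⟨by omega, fun x hx => hpos x (List.mem_cons_of_mem _ hx)⟩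

private lemma sum_comp {M : Type*} [AddCommMonoid M] (n : ℕ) (f : List ℕ → M) :
    ∑ c : Composition n, f c.blocks = ∑ l ∈ compFinset n, f l := by
  refine Finset.sum_bij (fun c _ => c.blocks) ?_ ?_ ?_ ?_
  · intro c _
    exact mem_compFinset.mpr ⟨c.blocks_sum, fun x hx => c.blocks_pos hx⟩
  · intro c _ c' _ h
    exact Composition.ext h
  · intro l hl
    obtain ⟨hsum, hpos⟩ := mem_compFinset.mp hl
    exact ⟨⟨l, fun {x} hx => hpos x hx, hsum⟩, Finset.mem_univ _, rfl⟩
  · intro c _; rfl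

private lemma sum_compFinset_succ {M : Type*} [AddCommMonoid M] (m : ℕ) (f : List ℕ → M) :
    ∑ l ∈ compFinset (m+1), f l
      = ∑ i ∈ Finset.range (m+1), ∑ t ∈ compFinset (m-i), f ((i+1) :: t) := by
  rw [compFinset, Finset.sum_biUnion]
  · refine Finset.sum_congr rfl fun i _ => ?_
    rw [Finset.sum_image]
    intro x _ y _ h
    exact (List.cons.injEq _ _ _ _ ▸ h).2
  · intro i hi j hj hij
    simp only [Finset.disjoint_left]
    intro l hl hl'
    simp only [Finset.mem_image] at hl hl'
    obtain ⟨t, _, rfl⟩ := hl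
    obtain ⟨t', _, h⟩ := hl'
    exact hij (by
      have := (List.cons.injEq _ _ _ _ ▸ h).1
      omega)

/-- Theorem 4.4 (second part): with `δ n = n • d n - δ 1 * d (n-1) - ... - δ (n-1) * d 1`,
one has `d n = Σ c_{r_1,...,r_m} δ_{r_1} ⋯ δ_{r_m}` summed over all compositions
`(r_1, ..., r_m)` of `n`, where
`c_{r_1,...,r_m} = 1/((r_1+⋯+r_m)(r_2+⋯+r_m)⋯(r_m))`. -/
theorem stmt_10 {A : Type*} [Ring A] [Algebra ℚ A]
    (d : ℕ → AddMonoid.End A) (hd0 : d 0 = 1)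
    (hHS : ∀ n, 1 ≤ n → ∀ a b : A,
      d n (a * b) = ∑ i ∈ Finset.range (n + 1), d i a * d (n - i) b)
    (δ : ℕ → AddMonoid.End A)
    (hδ : ∀ n, 1 ≤ n →
      δ n = n • d n - ∑ i ∈ Finset.range (n - 1), δ (i + 1) * d (n - 1 - i)) :
    ∀ n, 1 ≤ n → ∀ a : A,
      d n a = ∑ c : Composition n,
        (∏ j ∈ Finset.range c.length, (((c.blocks.drop j).sum : ℚ))⁻¹) •
          ((c.blocks.map δ).prod a) := by
  intro n
  induction n using Nat.strong_induction_on with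
  | _ n ih =>
    intro hn a
    -- convert the RHS to a sum over lists
    rw [show (∑ c : Composition n,
        (∏ j ∈ Finset.range c.length, (((c.blocks.drop j).sum : ℚ))⁻¹) •
          ((c.blocks.map δ).prod a))
      = ∑ l ∈ compFinset n,
        (∏ j ∈ Finset.range l.length, (((l.drop j).sum : ℚ))⁻¹) • ((l.map δ).prod a)
      from sum_comp n (fun l =>
        (∏ j ∈ Finset.range l.length, (((l.drop j).sum : ℚ))⁻¹) • ((l.map δ).prod a))]
    obtain ⟨m, rfl⟩ : ∃ m, n = m + 1 := ⟨n - 1, by omega⟩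
    have hne : ((m : ℚ) + 1) ≠ 0 := by positivity
    -- the recursion from hδ, applied to a
    have h0 : (m+1) • d (m+1) = δ (m+1) + ∑ i ∈ Finset.range (m+1-1), δ (i+1) * d (m+1-1-i) :=
      sub_eq_iff_eq_add.mp (hδ (m+1) (by omega)).symm
    have h1 : ((m : ℚ) + 1) • d (m+1) a
        = δ (m+1) a + ∑ i ∈ Finset.range m, δ (i+1) (d (m - i) a) := by
      have h2 := DFunLike.congr_fun h0 a
      have e1 : ((m+1) • d (m+1)) a = (m+1) • (d (m+1) a) := rfl
      have e2 : ((δ (m+1) + ∑ i ∈ Finset.range (m+1-1), δ (i+1) * d (m+1-1-i)) a)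
          = δ (m+1) a + ∑ i ∈ Finset.range m, δ (i+1) (d (m - i) a) := by
        erw [AddMonoidHom.add_apply, AddMonoidHom.finset_sum_apply]
        rfl
      rw [e1, e2] at h2
      rw [← h2, ← Nat.cast_smul_eq_nsmul ℚ]
      push_cast
      ring_nf
    -- rewrite the list sum using the cons decomposition
    have key : ∑ l ∈ compFinset (m+1),
          (∏ j ∈ Finset.range l.length, (((l.drop j).sum : ℚ))⁻¹) • ((l.map δ).prod a)
        = ∑ i ∈ Finset.range (m+1), ∑ t ∈ compFinset (m-i),
            ((m : ℚ) + 1)⁻¹ •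
              ((∏ j ∈ Finset.range t.length, (((t.drop j).sum : ℚ))⁻¹) •
                δ (i+1) ((t.map δ).prod a)) := by
      rw [sum_compFinset_succ]
      refine Finset.sum_congr rfl fun i hi => Finset.sum_congr rfl fun t ht => ?_
      have hi' : i < m + 1 := Finset.mem_range.mp hi
      have htsum : t.sum = m - i := (mem_compFinset.mp ht).1
      have hlen : ((i+1) :: t).length = t.length + 1 := rfl
      rw [hlen, Finset.prod_range_succ']
      have hdrop0 : (((i+1) :: t).drop 0).sum = m + 1 := by
        simp [htsum]; omega
      have hdropsucc : ∀ j, (((i+1) :: t).drop (j+1)) = t.drop j := fun j => rfl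
      simp only [hdropsucc, hdrop0]
      rw [List.map_cons, List.prod_cons, smul_smul]
      show _ • (δ (i+1)) ((List.map δ t).prod a) = _ • (δ (i+1)) ((List.map δ t).prod a)
      congr 1
      push_cast
      ring
    rw [key]
    -- cancel the (m+1)⁻¹ against multiplication by (m+1)
    rw [← (smul_right_injective A hne).eq_iff]
    rw [h1, Finset.smul_sum]
    simp only [Finset.smul_sum, smul_inv_smul₀ hne]
    rw [Finset.sum_range_succ]
    have hlast : ∑ t ∈ compFinset (m - m),
        (∏ j ∈ Finset.range t.length, (((t.drop j).sum : ℚ))⁻¹) •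
          δ (m+1) ((t.map δ).prod a) = δ (m+1) a := by
      rw [Nat.sub_self, show compFinset 0 = {[]} by rw [compFinset]]
      simp [AddMonoid.End.one_apply]
    rw [hlast, add_comm]
    congr 1
    refine Finset.sum_congr rfl fun i hi => ?_
    have hi' : i < m := Finset.mem_range.mp hi
    rw [ih (m - i) (by omega) (by omega) a]
    rw [show (∑ c : Composition (m - i),
        (∏ j ∈ Finset.range c.length, (((c.blocks.drop j).sum : ℚ))⁻¹) •
          ((c.blocks.map δ).prod a))
      = ∑ l ∈ compFinset (m - i),
        (∏ j ∈ Finset.range l.length, (((l.drop j).sum : ℚ))⁻¹) • ((l.map δ).prod a)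
      from sum_comp (m - i) (fun l =>
        (∏ j ∈ Finset.range l.length, (((l.drop j).sum : ℚ))⁻¹) • ((l.map δ).prod a))]
    rw [map_sum]
    exact Finset.sum_congr rfl fun t ht => map_rat_smul (δ (i+1)) _ _
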